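/- Let H = {x ∈ ℝⁿ : ⟨x, v⟩ ≤ θ} be a halfspace with unit normal v and θ ≥ 0, containing the origin. Then TInf[H] := E_{x∼N(0,Iₙ)}[1_H(x)·(n − ‖x‖²)] = θ·φ(θ), where φ is the standard univariate Gaussian density. -/

import Mathlib

open MeasureTheory ProbabilityTheory Real

/-- The standard Gaussian measure `N(0, Iₙ)` on `ℝⁿ`, defined via its density
`(2π)^{-n/2} e^{-‖x‖²/2}` with respect to Lebesgue measure. -/
noncomputable def stdGaussian (n : ℕ) : Measure (EuclideanSpace ℝ (Fin n)) :=
  volume.withDensity fun x => ENNReal.ofReal ((2 * π) ^ (-(n : ℝ) / 2) * Real.exp (-‖x‖ ^ 2 / 2))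

open Set Filter in
lemma aux_exp_form : (fun t : ℝ => Real.exp (-t^2/2)) = fun t => Real.exp (-(1/2) * t^2) := by
  funext t; ring_nf

open Set Filter in
lemma aux_int_exp : Integrable fun t : ℝ => Real.exp (-t^2/2) := by
  rw [aux_exp_form]
  exact integrable_exp_neg_mul_sq (by norm_num)

open Set Filter in
lemma aux_int_sq : Integrable fun t : ℝ => t^2 * Real.exp (-t^2/2) := by
  have := integrable_rpow_mul_exp_neg_mul_sq (b := 1/2) (by norm_num) (s := 2) (by norm_num)
  have h2 : ∀ t : ℝ, t ^ (2:ℝ) = t ^ 2 := fun t => Real.rpow_natCast t 2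
  simp_rw [h2] at this
  convert this using 2 with t
  ring_nf

open Set Filter in
lemma aux_int_one_sub_sq : Integrable fun t : ℝ => (1 - t^2) * Real.exp (-t^2/2) := by
  have h := aux_int_exp.sub aux_int_sq
  convert h using 1
  funext t; simp only [Pi.sub_apply]; ring_nf

open Set Filter in
lemma aux_hasDeriv (t : ℝ) :
    HasDerivAt (fun t : ℝ => t * Real.exp (-t^2/2)) ((1 - t^2) * Real.exp (-t^2/2)) t := by
  have h1 : HasDerivAt (fun t : ℝ => -t^2/2) (-t) t := by
    have := ((hasDerivAt_pow 2 t).neg.div_const 2)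
    exact this.congr_deriv (by push_cast; ring)
  have h3 := (hasDerivAt_id t).mul h1.exp
  exact h3.congr_deriv (by simp [id]; ring)

open Set Filter in
lemma aux_tendsto_top : Tendsto (fun t : ℝ => t * Real.exp (-t^2/2)) atTop (nhds 0) := by
  have hg : Tendsto (fun x : ℝ => Real.exp (-(1/2) * x)) atTop (nhds 0) := by
    have h1 : Tendsto (fun x : ℝ => -(1/2) * x) atTop atBot := by
      apply Tendsto.const_mul_atTop_of_neg (by norm_num) tendsto_id
    exact Real.tendsto_exp_atBot.comp h1
  have h := (rpow_mul_exp_neg_mul_sq_isLittleO_exp_neg (b := 1/2) (by norm_num) 1).tendsto_zero_of_tendsto hg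
  have he2 : (fun t : ℝ => t * Real.exp (-t^2/2)) = fun t => t ^ (1:ℝ) * Real.exp (-(1/2) * t^2) := by
    funext t; rw [Real.rpow_one]; ring_nf
  rw [he2]; exact h

open Set Filter in
lemma aux_tendsto_bot : Tendsto (fun t : ℝ => t * Real.exp (-t^2/2)) atBot (nhds 0) := by
  have h := (aux_tendsto_top.comp tendsto_neg_atBot_atTop).neg
  simp only [neg_zero] at h
  convert h using 1
  funext t; simp only [Function.comp_apply]; ring_nf

open Set Filter in
lemma aux_Iic (θ : ℝ) :
    ∫ t in Iic θ, (1 - t^2) * Real.exp (-t^2/2) = θ * Real.exp (-θ^2/2) := by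
  have := integral_Iic_of_hasDerivAt_of_tendsto' (a := θ) (fun x _ => aux_hasDeriv x)
    (aux_int_one_sub_sq.integrableOn) aux_tendsto_bot
  simpa using this

open Set Filter in
lemma aux_total : ∫ t : ℝ, (1 - t^2) * Real.exp (-t^2/2) = 0 := by
  have hIoi : ∫ t in Ioi (0:ℝ), (1 - t^2) * Real.exp (-t^2/2) = 0 - 0 * Real.exp (-(0:ℝ)^2/2) :=
    integral_Ioi_of_hasDerivAt_of_tendsto' (a := 0) (fun x _ => aux_hasDeriv x)
      (aux_int_one_sub_sq.integrableOn) aux_tendsto_top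
  have h := intervalIntegral.integral_Iic_add_Ioi (b := (0:ℝ))
    aux_int_one_sub_sq.integrableOn aux_int_one_sub_sq.integrableOn
  rw [aux_Iic 0] at h
  simp at hIoi h ⊢
  rw [← h, hIoi]

open Set Filter in
lemma aux_gauss : ∫ t : ℝ, Real.exp (-t^2/2) = Real.sqrt (2 * π) := by
  rw [aux_exp_form, integral_gaussian]
  rw [show π / (1/2) = 2 * π by ring]

open Set Filter in
lemma aux_c_mul_sqrt : (2 * π) ^ (-(1:ℝ)/2) * Real.sqrt (2*π) = 1 := by
  rw [Real.sqrt_eq_rpow, ← Real.rpow_add Real.two_pi_pos]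
  norm_num

/-- The elementary one-dimensional factor functions. -/
noncomputable def gaux (n : ℕ) [NeZero n] (θ : ℝ) (i j : Fin n) (t : ℝ) : ℝ :=
  ((2*π)^(-(1:ℝ)/2) * Real.exp (-t^2/2)) *
    ((if j = (0 : Fin n) then (if t ≤ θ then (1:ℝ) else 0) else 1) *
     (if j = i then 1 - t^2 else 1))

open Set Filter in
lemma aux_ind_eq (θ : ℝ) :
    (fun t : ℝ => ((2*π)^(-(1:ℝ)/2) * Real.exp (-t^2/2)) *
        ((if t ≤ θ then (1:ℝ) else 0) * (1 - t^2)))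
      = Set.indicator (Iic θ) (fun t => (2*π)^(-(1:ℝ)/2) * ((1 - t^2) * Real.exp (-t^2/2))) := by
  funext t
  by_cases ht : t ≤ θ <;> simp [Set.indicator_apply, Set.mem_Iic, ht] <;> ring

open Set Filter in
lemma aux_ind_eq' (θ : ℝ) :
    (fun t : ℝ => ((2*π)^(-(1:ℝ)/2) * Real.exp (-t^2/2)) *
        ((if t ≤ θ then (1:ℝ) else 0) * 1))
      = Set.indicator (Iic θ) (fun t => (2*π)^(-(1:ℝ)/2) * Real.exp (-t^2/2)) := by
  funext t
  by_cases ht : t ≤ θ <;> simp [Set.indicator_apply, Set.mem_Iic, ht]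

open Set Filter in
lemma gaux_integrable (n : ℕ) [NeZero n] (θ : ℝ) (i j : Fin n) :
    Integrable (gaux n θ i j) := by
  unfold gaux
  by_cases hj0 : j = 0
  · subst hj0
    by_cases hji : i = 0
    · subst hji
      simp only [eq_self_iff_true, if_true]
      rw [aux_ind_eq]
      exact (aux_int_one_sub_sq.const_mul _).indicator measurableSet_Iic
    · have h0i : ¬ ((0 : Fin n) = i) := fun h => hji h.symm
      simp only [eq_self_iff_true, if_true, if_neg h0i]
      rw [aux_ind_eq']
      exact (aux_int_exp.const_mul _).indicator measurableSet_Iic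
  · by_cases hji : j = i
    · subst hji
      simp only [if_neg hj0, eq_self_iff_true, if_true, one_mul]
      have he : (fun t : ℝ => ((2*π)^(-(1:ℝ)/2) * Real.exp (-t^2/2)) * (1 - t^2))
          = fun t : ℝ => (2*π)^(-(1:ℝ)/2) * ((1 - t^2) * Real.exp (-t^2/2)) := by
        funext t; ring
      rw [he]
      exact aux_int_one_sub_sq.const_mul _
    · simp only [if_neg hj0, if_neg hji, mul_one]
      exact aux_int_exp.const_mul _

open Set Filter in
lemma gaux_val_ne (n : ℕ) [NeZero n] (θ : ℝ) (i j : Fin n) (hj0 : j ≠ 0) (hji : j ≠ i) :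
    ∫ t, gaux n θ i j t = 1 := by
  unfold gaux
  simp only [if_neg hj0, if_neg hji, mul_one]
  rw [MeasureTheory.integral_const_mul, aux_gauss, aux_c_mul_sqrt]

open Set Filter in
lemma gaux_val_diag (n : ℕ) [NeZero n] (θ : ℝ) (i : Fin n) (hi : i ≠ 0) :
    ∫ t, gaux n θ i i t = 0 := by
  unfold gaux
  simp only [if_neg hi, eq_self_iff_true, if_true, one_mul]
  have he : (fun t : ℝ => ((2*π)^(-(1:ℝ)/2) * Real.exp (-t^2/2)) * (1 - t^2))
      = fun t : ℝ => (2*π)^(-(1:ℝ)/2) * ((1 - t^2) * Real.exp (-t^2/2)) := by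
    funext t; ring
  rw [he, MeasureTheory.integral_const_mul, aux_total, mul_zero]

open Set Filter in
lemma gaux_val_zero (n : ℕ) [NeZero n] (θ : ℝ) :
    ∫ t, gaux n θ 0 0 t = θ * ((2*π)^(-(1:ℝ)/2) * Real.exp (-θ^2/2)) := by
  unfold gaux
  simp only [eq_self_iff_true, if_true]
  rw [aux_ind_eq, integral_indicator measurableSet_Iic, MeasureTheory.integral_const_mul, aux_Iic]
  ring

open Set Filter in
lemma aux_expand (n : ℕ) [NeZero n] (θ : ℝ) (x : Fin n → ℝ) :
    ((2*π) ^ (-(n:ℝ)/2) * Real.exp (-(∑ i, (x i)^2)/2)) *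
      (if x 0 ≤ θ then ((n:ℝ) - ∑ i, (x i)^2) else 0)
    = ∑ i, ∏ j, gaux n θ i j (x j) := by
  unfold gaux
  have hc : ∏ _j : Fin n, ((2*π:ℝ)^(-(1:ℝ)/2)) = (2*π) ^ (-(n:ℝ)/2) := by
    rw [Finset.prod_const, Finset.card_univ, Fintype.card_fin,
      ← Real.rpow_natCast ((2*π)^(-(1:ℝ)/2)) n, ← Real.rpow_mul (by positivity)]
    congr 1; ring
  have hexp : ∏ j : Fin n, Real.exp (-(x j)^2/2) = Real.exp (-(∑ i, (x i)^2)/2) := by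
    rw [← Real.exp_sum]
    congr 1
    rw [← Finset.sum_div, ← Finset.sum_neg_distrib]
  have hprod : ∀ i : Fin n,
      (∏ j, ((2*π)^(-(1:ℝ)/2) * Real.exp (-(x j)^2/2)) *
        ((if j = (0:Fin n) then (if x j ≤ θ then (1:ℝ) else 0) else 1) *
         (if j = i then 1 - (x j)^2 else 1)))
      = ((2*π) ^ (-(n:ℝ)/2) * Real.exp (-(∑ j, (x j)^2)/2)) *
        ((if x 0 ≤ θ then (1:ℝ) else 0) * (1 - (x i)^2)) := by
    intro i
    rw [Finset.prod_mul_distrib, Finset.prod_mul_distrib, Finset.prod_mul_distrib, hc, hexp]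
    congr 1
    congr 1
    · exact Finset.prod_ite_eq' Finset.univ (0 : Fin n) (fun j => if x j ≤ θ then (1:ℝ) else 0) |>.trans (by simp)
    · exact Finset.prod_ite_eq' Finset.univ i (fun j => 1 - (x j)^2) |>.trans (by simp)
  simp_rw [hprod]
  rw [← Finset.mul_sum]
  by_cases hx : x 0 ≤ θ
  · simp only [hx, if_true, one_mul]
    congr 1
    rw [Finset.sum_sub_distrib, Finset.sum_const, Finset.card_univ, Fintype.card_fin]
    simp
  · simp [hx]

/-- The total convex influence of the halfspace `{x : ⟨x, v⟩ ≤ θ}` (with `‖v‖ = 1`, `θ ≥ 0`)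
equals `θ·φ(θ)`. -/
theorem tinf_halfspace (n : ℕ) (v : EuclideanSpace ℝ (Fin n)) (hv : ‖v‖ = 1)
    (θ : ℝ) (hθ : 0 ≤ θ) :
    ∫ x, Set.indicator {y : EuclideanSpace ℝ (Fin n) | (inner ℝ y v : ℝ) ≤ θ}
        (fun x => (n : ℝ) - ‖x‖ ^ 2) x ∂stdGaussian n
      = θ * ((2 * π) ^ (-(1 : ℝ) / 2) * Real.exp (-θ ^ 2 / 2)) := by
  rcases Nat.eq_zero_or_pos n with rfl | hn
  · have hv0 : v = 0 := Subsingleton.elim v 0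
    rw [hv0, norm_zero] at hv
    norm_num at hv
  haveI : NeZero n := ⟨hn.ne'⟩
  -- extend `v` to an orthonormal basis `b` with `b 0 = v`
  have hvon : Orthonormal ℝ (Set.restrict ({0} : Set (Fin n)) (fun _ : Fin n => v)) := by
    rw [orthonormal_iff_ite]
    rintro ⟨i, hi⟩ ⟨j, hj⟩
    simp only [Set.mem_singleton_iff] at hi hj
    subst hi; subst hj
    rw [if_pos (Subtype.ext rfl)]
    show (inner ℝ v v : ℝ) = 1
    rw [real_inner_self_eq_norm_mul_norm, hv]; norm_num
  obtain ⟨b, hb⟩ := hvon.exists_orthonormalBasis_extension_of_card_eq (by simp)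
  have hb0 : b 0 = v := hb 0 rfl
  have hinner : ∀ y : EuclideanSpace ℝ (Fin n), (inner ℝ y v : ℝ) = b.repr y 0 := by
    intro y
    rw [← hb0, ← b.repr.inner_map_map y (b 0), OrthonormalBasis.repr_self]
    simp [EuclideanSpace.inner_single_right]
  -- the measure-preserving change of variables
  set Φ : (Fin n → ℝ) → EuclideanSpace ℝ (Fin n) :=
    fun x => b.repr.symm ((MeasurableEquiv.toLp 2 (Fin n → ℝ)) x) with hΦdef
  have hΦmp : MeasurePreserving Φ volume volume :=
    (b.measurePreserving_repr_symm).comp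
      (EuclideanSpace.volume_preserving_symm_measurableEquiv_toLp (Fin n)).symm
  have hΦemb : MeasurableEmbedding Φ :=
    ((MeasurableEquiv.toLp 2 (Fin n → ℝ)).trans
      b.repr.symm.toMeasurableEquiv).measurableEmbedding
  have hΦnorm : ∀ x : Fin n → ℝ, ‖Φ x‖ ^ 2 = ∑ i, (x i)^2 := by
    intro x
    rw [hΦdef]
    simp only [LinearIsometryEquiv.norm_map]
    rw [MeasurableEquiv.coe_toLp, EuclideanSpace.norm_eq,
      Real.sq_sqrt (by positivity)]
    simp
  have hΦinner : ∀ x : Fin n → ℝ, (inner ℝ (Φ x) v : ℝ) = x 0 := by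
    intro x
    rw [hinner, hΦdef]
    simp only [LinearIsometryEquiv.apply_symm_apply]
    rw [MeasurableEquiv.coe_toLp]
  -- step 1: unfold the density
  rw [_root_.stdGaussian]
  have hmeas : Measurable fun x : EuclideanSpace ℝ (Fin n) =>
      ((2 * π) ^ (-(n : ℝ) / 2) * Real.exp (-‖x‖ ^ 2 / 2)).toNNReal := by
    apply Measurable.real_toNNReal
    exact (continuous_const.mul (((continuous_norm.pow 2).neg.div_const 2).rexp)).measurable
  have hofReal : (fun x : EuclideanSpace ℝ (Fin n) =>
      ENNReal.ofReal ((2 * π) ^ (-(n : ℝ) / 2) * Real.exp (-‖x‖ ^ 2 / 2)))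
      = fun x => (((2 * π) ^ (-(n : ℝ) / 2) * Real.exp (-‖x‖ ^ 2 / 2)).toNNReal : ENNReal) := rfl
  rw [hofReal, integral_withDensity_eq_integral_smul hmeas]
  have hsmul : (fun x : EuclideanSpace ℝ (Fin n) =>
      ((2 * π) ^ (-(n : ℝ) / 2) * Real.exp (-‖x‖ ^ 2 / 2)).toNNReal •
        Set.indicator {y : EuclideanSpace ℝ (Fin n) | (inner ℝ y v : ℝ) ≤ θ}
          (fun x => (n : ℝ) - ‖x‖ ^ 2) x)
      = fun x => ((2 * π) ^ (-(n : ℝ) / 2) * Real.exp (-‖x‖ ^ 2 / 2)) *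
        Set.indicator {y : EuclideanSpace ℝ (Fin n) | (inner ℝ y v : ℝ) ≤ θ}
          (fun x => (n : ℝ) - ‖x‖ ^ 2) x := by
    funext x
    rw [NNReal.smul_def, Real.coe_toNNReal _ (by positivity)]
    simp [smul_eq_mul]
  rw [hsmul]
  -- step 2: change variables
  rw [← hΦmp.integral_comp hΦemb]
  -- step 3: pointwise simplification
  have hpt : ∀ x : Fin n → ℝ,
      ((2 * π) ^ (-(n : ℝ) / 2) * Real.exp (-‖Φ x‖ ^ 2 / 2)) *
        Set.indicator {y : EuclideanSpace ℝ (Fin n) | (inner ℝ y v : ℝ) ≤ θ}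
          (fun x => (n : ℝ) - ‖x‖ ^ 2) (Φ x)
      = ∑ i, ∏ j, gaux n θ i j (x j) := by
    intro x
    have hmem : (Φ x ∈ {y : EuclideanSpace ℝ (Fin n) | (inner ℝ y v : ℝ) ≤ θ}) ↔ (x 0 ≤ θ) := by
      simp only [Set.mem_setOf_eq, hΦinner]
    rw [Set.indicator_apply, if_congr hmem rfl rfl, hΦnorm x]
    exact aux_expand n θ x
  simp only [hpt]
  -- step 4: Fubini
  rw [integral_finset_sum (μ := volume) _ (fun i _ =>
    Integrable.fintype_prod (fun j => gaux_integrable n θ i j))]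
  have hfub : ∀ i : Fin n, (∫ x : Fin n → ℝ, ∏ j, gaux n θ i j (x j))
      = ∏ j, ∫ t, gaux n θ i j t :=
    fun i => MeasureTheory.integral_fintype_prod_eq_prod (ι := Fin n) (gaux n θ i)
  simp_rw [hfub]
  -- step 5: compute the sum
  rw [Finset.sum_eq_single (0 : Fin n)]
  · rw [Finset.prod_eq_single (0 : Fin n)]
    · exact gaux_val_zero n θ
    · intro j _ hj
      exact gaux_val_ne n θ 0 j hj hj
    · intro h
      exact absurd (Finset.mem_univ _) h
  · intro i _ hi
    apply Finset.prod_eq_zero (Finset.mem_univ i)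
    exact gaux_val_diag n θ i hi
  · intro h
    exact absurd (Finset.mem_univ _) h
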